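/- For indeterminates x, y and positive integers a, b: Σ over r,s,u,v ≥ 0 with r+s = a of (−1)^{u+v}·C(r,u)·C(s,v)·C(u+v, a−b)·(x+1)^{r−u}·(y+1)^{s−v} = (−1)^{a+b}·C(a+1, b+1)·(x^{b+1} − y^{b+1})/(x−y), as an identity of polynomials in x and y (the right side being the complete homogeneous polynomial Σ_{i+j=b} x^i y^j times (−1)^{a+b}C(a+1,b+1)). -/

import Mathlib

/-- Binomial coefficient `C(m, k)` with integer lower index, zero for `k < 0`. -/
def chooseInt (m : ℕ) (k : ℤ) : ℤ := if 0 ≤ k then Nat.choose m k.toNat else 0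

open Polynomial in
lemma coeff_sub_pow_mul_sub_pow (x y : ℂ) (r s k : ℕ) :
    ((C x - X) ^ r * (C y - X) ^ s).coeff k =
      ∑ u ∈ Finset.range (r + 1), ∑ v ∈ Finset.range (s + 1),
        (-1 : ℂ) ^ (u + v) * (Nat.choose r u) * (Nat.choose s v) *
          (Nat.choose (u + v) k) * (x + 1) ^ (r - u) * (y + 1) ^ (s - v) := by
  have hx : (C x - X : ℂ[X]) = (-(1 + X)) + C (x + 1) := by
    simp [map_add]; ring
  have hy : (C y - X : ℂ[X]) = (-(1 + X)) + C (y + 1) := by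
    simp [map_add]; ring
  rw [hx, hy, add_pow, add_pow, Finset.sum_mul_sum, finset_sum_coeff]
  refine Finset.sum_congr rfl fun u hu => ?_
  rw [finset_sum_coeff]
  refine Finset.sum_congr rfl fun v hv => ?_
  have hterm :
      (-(1 + X)) ^ u * C (x + 1) ^ (r - u) * (r.choose u : ℂ[X]) *
        ((-(1 + X)) ^ v * C (y + 1) ^ (s - v) * (s.choose v : ℂ[X])) =
      C ((-1 : ℂ) ^ (u + v) * (r.choose u) * (s.choose v) *
          (x + 1) ^ (r - u) * (y + 1) ^ (s - v)) * (1 + X) ^ (u + v) := by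
    rw [show (-(1 + X) : ℂ[X]) = C (-1) * (1 + X) by simp]
    simp only [map_mul, map_pow, map_neg, map_one, ← Polynomial.C_eq_natCast, mul_pow]
    ring
  rw [hterm, coeff_C_mul, coeff_one_add_X_pow]
  ring

open Polynomial in
lemma coeff_sub_pow (x : ℂ) (n k : ℕ) :
    ((C x - X) ^ n).coeff k = (-1 : ℂ) ^ n * (-x) ^ (n - k) * (n.choose k) := by
  have h0 : (C x - X : ℂ[X]) = (-1) * (X + C (-x)) := by
    simp only [map_neg]; ring
  rw [h0, mul_pow]
  have h1 : ((-1 : ℂ[X]) ^ n) = C ((-1 : ℂ) ^ n) := by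
    simp [map_pow]
  rw [h1, coeff_C_mul, coeff_X_add_C_pow]
  ring

open Polynomial in
theorem stmt_12 (a b : ℕ) (ha : 1 ≤ a) (hb : 1 ≤ b) (x y : ℂ) :
    (∑ r ∈ Finset.range (a + 1), ∑ u ∈ Finset.range (r + 1),
        ∑ v ∈ Finset.range (a - r + 1),
          (-1 : ℂ) ^ (u + v) * Nat.choose r u * Nat.choose (a - r) v *
            (chooseInt (u + v) ((a : ℤ) - b) : ℂ) *
            (x + 1) ^ (r - u) * (y + 1) ^ (a - r - v)) =
      (-1 : ℂ) ^ (a + b) * Nat.choose (a + 1) (b + 1) *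
        ∑ i ∈ Finset.range (b + 1), x ^ i * y ^ (b - i) := by
  rcases lt_or_ge a b with hab | hab
  · -- a < b : both sides vanish
    have hneg : ¬ (0 : ℤ) ≤ (a : ℤ) - b := by omega
    have hc : Nat.choose (a + 1) (b + 1) = 0 := Nat.choose_eq_zero_of_lt (by omega)
    simp [chooseInt, hneg, hc]
    intro h; omega
  · -- b ≤ a
    set k := a - b with hk
    have hkc : ((a : ℤ) - b) = (k : ℤ) := by omega
    have hchoose : ∀ m : ℕ, ((chooseInt m ((a : ℤ) - b) : ℤ) : ℂ) = (Nat.choose m k : ℂ) := by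
      intro m; rw [hkc]; simp [chooseInt]
    -- reduce to a statement for x ≠ y by continuity
    suffices H : ∀ x y : ℂ, x ≠ y →
        (∑ r ∈ Finset.range (a + 1), ∑ u ∈ Finset.range (r + 1),
            ∑ v ∈ Finset.range (a - r + 1),
              (-1 : ℂ) ^ (u + v) * Nat.choose r u * Nat.choose (a - r) v *
                (Nat.choose (u + v) k : ℂ) *
                (x + 1) ^ (r - u) * (y + 1) ^ (a - r - v)) =
          (-1 : ℂ) ^ (a + b) * Nat.choose (a + 1) (b + 1) *
            ∑ i ∈ Finset.range (b + 1), x ^ i * y ^ (b - i) by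
      simp only [hchoose]
      have hdense : Dense ({y}ᶜ : Set ℂ) := dense_compl_singleton y
      have hcont1 : Continuous fun x : ℂ =>
          (∑ r ∈ Finset.range (a + 1), ∑ u ∈ Finset.range (r + 1),
            ∑ v ∈ Finset.range (a - r + 1),
              (-1 : ℂ) ^ (u + v) * Nat.choose r u * Nat.choose (a - r) v *
                (Nat.choose (u + v) k : ℂ) *
                (x + 1) ^ (r - u) * (y + 1) ^ (a - r - v)) := by
        refine continuous_finset_sum _ fun r _ => continuous_finset_sum _ fun u _ =>
          continuous_finset_sum _ fun v _ => ?_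
        fun_prop
      have hcont2 : Continuous fun x : ℂ =>
          (-1 : ℂ) ^ (a + b) * Nat.choose (a + 1) (b + 1) *
            ∑ i ∈ Finset.range (b + 1), x ^ i * y ^ (b - i) := by
        refine Continuous.mul continuous_const (continuous_finset_sum _ fun i _ => ?_)
        fun_prop
      have := Continuous.ext_on hdense hcont1 hcont2 (fun x hx => H x y hx)
      exact congrFun this x
    intro x y hxy
    -- the generating polynomial
    set Q : ℂ[X] := ∑ r ∈ Finset.range (a + 1), (C x - X) ^ r * (C y - X) ^ (a - r) with hQ
    have hQcoeff : Q.coeff k =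
        ∑ r ∈ Finset.range (a + 1), ∑ u ∈ Finset.range (r + 1),
            ∑ v ∈ Finset.range (a - r + 1),
              (-1 : ℂ) ^ (u + v) * Nat.choose r u * Nat.choose (a - r) v *
                (Nat.choose (u + v) k : ℂ) *
                (x + 1) ^ (r - u) * (y + 1) ^ (a - r - v) := by
      rw [hQ, finset_sum_coeff]
      exact Finset.sum_congr rfl fun r _ => coeff_sub_pow_mul_sub_pow x y r (a - r) k
    have hgeom : Q * C (x - y) = (C x - X) ^ (a + 1) - (C y - X) ^ (a + 1) := by
      have := geom_sum₂_mul (C x - X) (C y - X) (a + 1)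
      simpa [map_sub] using this
    have hQmul : Q.coeff k * (x - y) =
        (-1 : ℂ) ^ (a + b) * (Nat.choose (a + 1) k) * (x ^ (b + 1) - y ^ (b + 1)) := by
      have h1 : (Q * C (x - y)).coeff k = Q.coeff k * (x - y) := coeff_mul_C _ _ _
      rw [← h1, hgeom, coeff_sub, coeff_sub_pow, coeff_sub_pow]
      have hab1 : a + 1 - k = b + 1 := by omega
      rw [hab1]
      have e : ∀ z : ℂ, (-1 : ℂ) ^ (a + 1) * (-z) ^ (b + 1) = (-1 : ℂ) ^ (a + b) * z ^ (b + 1) := by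
        intro z
        rw [neg_pow z, ← mul_assoc, ← pow_add, show a + 1 + (b + 1) = (a + b) + 2 by omega,
          pow_add]
        ring
      calc (-1 : ℂ) ^ (a + 1) * (-x) ^ (b + 1) * ↑((a + 1).choose k) -
            (-1 : ℂ) ^ (a + 1) * (-y) ^ (b + 1) * ↑((a + 1).choose k)
          = ((-1 : ℂ) ^ (a + 1) * (-x) ^ (b + 1)) * ↑((a + 1).choose k) -
            ((-1 : ℂ) ^ (a + 1) * (-y) ^ (b + 1)) * ↑((a + 1).choose k) := by ring
        _ = _ := by rw [e x, e y]; ring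
    have hsymm : Nat.choose (a + 1) k = Nat.choose (a + 1) (b + 1) := by
      have : k = (a + 1) - (b + 1) := by omega
      rw [this, Nat.choose_symm (by omega)]
    have hRHSmul :
        ((-1 : ℂ) ^ (a + b) * Nat.choose (a + 1) (b + 1) *
          ∑ i ∈ Finset.range (b + 1), x ^ i * y ^ (b - i)) * (x - y) =
        (-1 : ℂ) ^ (a + b) * (Nat.choose (a + 1) k) * (x ^ (b + 1) - y ^ (b + 1)) := by
      have hg := geom_sum₂_mul x y (b + 1)
      simp only [Nat.add_sub_cancel] at hg
      rw [hsymm]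
      linear_combination ((-1 : ℂ) ^ (a + b) * ((a + 1).choose (b + 1) : ℂ)) * hg
    have hx_y : x - y ≠ 0 := sub_ne_zero.mpr hxy
    rw [← hQcoeff]
    exact mul_right_cancel₀ hx_y (by rw [hQmul, hRHSmul])
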